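/- Delocalisation from resolvent bound: Let X ∈ ℂ^{n×n}, ζ ∈ ℂ, u ∈ ℂⁿ \ {0} with X u = ζ u, and let H_ζ = [[0, X-ζ],[(X-ζ)*, 0]] ∈ ℂ^{2n×2n} with resolvent G = (H_ζ - iη)⁻¹ for η > 0. Then for any w ∈ ℂⁿ, setting x = (0,w)ᵀ ∈ ℂ^{2n}: Im⟨x, G x⟩ ≥ |⟨w,u⟩|²/(η‖u‖²). Consequently, if |⟨x, G x⟩| ≤ C‖w‖² then |⟨w,u⟩|² ≤ C η ‖w‖²‖u‖². -/

import Mathlib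

open Matrix Complex

private lemma dotSelf16 {m : Type*} [Fintype m] (y : m → ℂ) :
    dotProduct (star y) y = ((∑ i, ‖y i‖^2 : ℝ) : ℂ) := by
  simp [dotProduct, ← Complex.normSq_eq_norm_sq, Complex.normSq_eq_conj_mul_self]

private lemma hermIm16 {m : Type*} [Fintype m] {M : Matrix m m ℂ} (hM : Mᴴ = M) (y : m → ℂ) :
    (dotProduct (star y) (M.mulVec y)).im = 0 := by
  rw [← Complex.conj_eq_iff_im]
  calc (starRingEnd ℂ) (star y ⬝ᵥ M *ᵥ y) = star (star y ⬝ᵥ M *ᵥ y) := rfl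
    _ = star (M *ᵥ y) ⬝ᵥ y := by rw [Matrix.star_dotProduct]; simp
    _ = (star y ᵥ* Mᴴ) ⬝ᵥ y := by rw [Matrix.star_mulVec]
    _ = star y ⬝ᵥ Mᴴ *ᵥ y := by rw [Matrix.dotProduct_mulVec]
    _ = star y ⬝ᵥ M *ᵥ y := by rw [hM]

private lemma cs16 {m : Type*} [Fintype m] (a b : m → ℂ) :
    ‖dotProduct (star a) b‖ ^ 2 ≤
      (∑ i, ‖a i‖^2) * (∑ i, ‖b i‖^2) := by
  have h := norm_inner_le_norm (𝕜 := ℂ) ((WithLp.equiv 2 (m → ℂ)).symm a) ((WithLp.equiv 2 (m → ℂ)).symm b)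
  rw [show inner ℂ ((WithLp.equiv 2 (m → ℂ)).symm a) ((WithLp.equiv 2 (m → ℂ)).symm b) = b ⬝ᵥ star a from rfl, dotProduct_comm] at h
  have ha : ‖(WithLp.equiv 2 (m → ℂ)).symm a‖ ^ 2 = ∑ i, ‖a i‖^2 := by
    rw [EuclideanSpace.norm_eq, Real.sq_sqrt (by positivity)]
    simp
  have hb : ‖(WithLp.equiv 2 (m → ℂ)).symm b‖ ^ 2 = ∑ i, ‖b i‖^2 := by
    rw [EuclideanSpace.norm_eq, Real.sq_sqrt (by positivity)]
    simp
  calc ‖star a ⬝ᵥ b‖ ^ 2 = ‖star a ⬝ᵥ b‖ ^ 2 := rfl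
    _ ≤ (‖(WithLp.equiv 2 (m → ℂ)).symm a‖ * ‖(WithLp.equiv 2 (m → ℂ)).symm b‖)^2 :=
        pow_le_pow_left₀ (norm_nonneg _) h 2
    _ = _ := by rw [mul_pow, ha, hb]

theorem stmt16 (n : ℕ) (X : Matrix (Fin n) (Fin n) ℂ) (ζ : ℂ)
    (u : Fin n → ℂ) (hu : u ≠ 0) (heig : X.mulVec u = ζ • u)
    (η : ℝ) (hη : 0 < η) (w : Fin n → ℂ) (C : ℝ) :
    let Hζ : Matrix (Fin n ⊕ Fin n) (Fin n ⊕ Fin n) ℂ :=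
      Matrix.fromBlocks 0 (X - ζ • (1 : Matrix (Fin n) (Fin n) ℂ))
        (X - ζ • (1 : Matrix (Fin n) (Fin n) ℂ))ᴴ 0
    let G := (Hζ - (Complex.I * η) • (1 : Matrix (Fin n ⊕ Fin n) (Fin n ⊕ Fin n) ℂ))⁻¹
    let x : Fin n ⊕ Fin n → ℂ := Sum.elim 0 w
    (‖dotProduct (star w) u‖ ^ 2 / (η * ∑ i, ‖u i‖ ^ 2)
        ≤ (dotProduct (star x) (G.mulVec x)).im) ∧
      (‖dotProduct (star x) (G.mulVec x)‖ ≤ C * ∑ i, ‖w i‖ ^ 2 →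
        ‖dotProduct (star w) u‖ ^ 2
          ≤ C * η * (∑ i, ‖w i‖ ^ 2) * (∑ i, ‖u i‖ ^ 2)) := by
  intro Hζ G x
  have hx : x = Sum.elim (0 : Fin n → ℂ) w := rfl
  set A : Matrix (Fin n ⊕ Fin n) (Fin n ⊕ Fin n) ℂ :=
    Hζ - (Complex.I * η) • (1 : Matrix (Fin n ⊕ Fin n) (Fin n ⊕ Fin n) ℂ) with hA
  have hH : Hζᴴ = Hζ := by
    show (Matrix.fromBlocks 0 (X - ζ • (1 : Matrix (Fin n) (Fin n) ℂ))
        (X - ζ • (1 : Matrix (Fin n) (Fin n) ℂ))ᴴ 0)ᴴ = _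
    rw [Matrix.fromBlocks_conjTranspose, Matrix.conjTranspose_conjTranspose,
      Matrix.conjTranspose_zero]
  have hAH : Aᴴ = Hζ + (Complex.I * η) • (1 : Matrix (Fin n ⊕ Fin n) (Fin n ⊕ Fin n) ℂ) := by
    rw [hA, Matrix.conjTranspose_sub, hH, Matrix.conjTranspose_smul, Matrix.conjTranspose_one]
    rw [sub_eq_add_neg, ← neg_smul]
    congr 1
    simp [Complex.ext_iff]
  have hAmul : ∀ z : Fin n ⊕ Fin n → ℂ, A *ᵥ z = Hζ *ᵥ z - (Complex.I * η) • z := by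
    intro z
    rw [hA, Matrix.sub_mulVec, Matrix.smul_mulVec, Matrix.one_mulVec]
  have hAHmul : ∀ z : Fin n ⊕ Fin n → ℂ, Aᴴ *ᵥ z = Hζ *ᵥ z + (Complex.I * η) • z := by
    intro z
    rw [hAH, Matrix.add_mulVec, Matrix.smul_mulVec, Matrix.one_mulVec]
  -- invertibility
  have hker : ∀ z : Fin n ⊕ Fin n → ℂ, A *ᵥ z = 0 → z = 0 := by
    intro z hz
    set s : ℝ := ∑ i, ‖z i‖^2 with hs
    have h0 : star z ⬝ᵥ A *ᵥ z = 0 := by rw [hz]; simp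
    rw [hAmul, dotProduct_sub, dotProduct_smul, dotSelf16, ← hs] at h0
    have h1 := congrArg Complex.im h0
    simp only [Complex.sub_im, Complex.zero_im, smul_eq_mul, Complex.mul_im, Complex.mul_re,
      Complex.I_re, Complex.I_im, Complex.ofReal_re, Complex.ofReal_im,
      hermIm16 hH z] at h1
    have hs0 : s = 0 := by
      have : η * s = 0 := by linarith
      rcases mul_eq_zero.mp this with h | h
      · exact absurd h hη.ne'
      · exact h
    funext i
    have hnn : ∀ j, (0:ℝ) ≤ ‖z j‖^2 := fun j => by positivity
    have hsum0 : (∑ j, ‖z j‖^2) = 0 := by rw [← hs]; exact hs0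
    have h2 := (Finset.sum_eq_zero_iff_of_nonneg (fun j _ => hnn j)).mp hsum0 i (Finset.mem_univ i)
    have h3 : ‖z i‖ = 0 := by nlinarith [h2]
    simpa using h3
  have hinj : Function.Injective A.mulVec := by
    intro p q hpq
    have h4 : A *ᵥ (p - q) = 0 := by rw [Matrix.mulVec_sub, hpq, sub_self]
    exact sub_eq_zero.mp (hker _ h4)
  have hunit : IsUnit A := Matrix.mulVec_injective_iff_isUnit.mp hinj
  have hdet : IsUnit A.det := (Matrix.isUnit_iff_isUnit_det A).mp hunit
  have hAG : A * G = 1 := Matrix.mul_nonsing_inv A hdet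
  obtain ⟨y, hy⟩ : ∃ y, G *ᵥ x = y := ⟨_, rfl⟩
  rw [hy]
  have hAy : A *ᵥ y = x := by rw [← hy, Matrix.mulVec_mulVec, hAG, Matrix.one_mulVec]
  set S : ℂ := star x ⬝ᵥ y with hS
  set r : ℝ := ∑ i, ‖y i‖^2 with hr
  have hrnn : 0 ≤ r := by positivity
  have hSim : S.im = η * r := by
    have hcalc : S = star y ⬝ᵥ Hζ *ᵥ y + Complex.I * η * (r : ℂ) := by
      calc S = star (A *ᵥ y) ⬝ᵥ y := by rw [hAy]
        _ = (star y ᵥ* Aᴴ) ⬝ᵥ y := by rw [Matrix.star_mulVec]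
        _ = star y ⬝ᵥ Aᴴ *ᵥ y := by rw [← Matrix.dotProduct_mulVec]
        _ = star y ⬝ᵥ (Hζ *ᵥ y) + Complex.I * η * (star y ⬝ᵥ y) := by
            rw [hAHmul, dotProduct_add, dotProduct_smul]; rfl
        _ = _ := by rw [dotSelf16, ← hr]
    rw [hcalc]
    simp [hermIm16 hH y]
  set v : Fin n ⊕ Fin n → ℂ := Sum.elim 0 u with hv
  have hHv : Hζ *ᵥ v = 0 := by
    show Matrix.fromBlocks 0 (X - ζ • (1 : Matrix (Fin n) (Fin n) ℂ))
        (X - ζ • (1 : Matrix (Fin n) (Fin n) ℂ))ᴴ 0 *ᵥ Sum.elim 0 u = 0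
    rw [Matrix.fromBlocks_mulVec]
    have h1 : (X - ζ • (1 : Matrix (Fin n) (Fin n) ℂ)) *ᵥ u = 0 := by
      rw [Matrix.sub_mulVec, heig, Matrix.smul_mulVec, Matrix.one_mulVec, sub_self]
    simp [h1]
  have hAHv : Aᴴ *ᵥ v = (Complex.I * η) • v := by rw [hAHmul, hHv, zero_add]
  have hkey : star v ⬝ᵥ x = -(Complex.I * η) * (star v ⬝ᵥ y) := by
    calc star v ⬝ᵥ x = star v ⬝ᵥ A *ᵥ y := by rw [hAy]
      _ = (star v ᵥ* A) ⬝ᵥ y := by rw [Matrix.dotProduct_mulVec]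
      _ = star (Aᴴ *ᵥ v) ⬝ᵥ y := by rw [Matrix.star_mulVec, Matrix.conjTranspose_conjTranspose]
      _ = (-(Complex.I * η) • star v) ⬝ᵥ y := by
          rw [hAHv, star_smul]
          congr 1
          simp [Complex.ext_iff]
      _ = _ := by rw [smul_dotProduct]; rfl
  have hvx : star v ⬝ᵥ x = star u ⬝ᵥ w := by
    rw [hv, hx]
    simp [dotProduct, Fintype.sum_sum_type]
  have hIeta : ‖-(Complex.I * (η:ℂ))‖ = η := by
    simp [abs_of_pos hη]
  have habs : ‖star u ⬝ᵥ w‖ = η * ‖star v ⬝ᵥ y‖ := by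
    rw [← hvx, hkey, norm_mul, hIeta]
  have hwu : ‖star w ⬝ᵥ u‖ = ‖star u ⬝ᵥ w‖ := by
    rw [Matrix.star_dotProduct (v := w) (w := u)]
    simp
  set U : ℝ := ∑ i, ‖u i‖^2 with hU
  have hUpos : 0 < U := by
    rcases Function.ne_iff.mp hu with ⟨i, hi⟩
    apply Finset.sum_pos' (fun j _ => by positivity)
    exact ⟨i, Finset.mem_univ i, pow_pos (norm_pos_iff.mpr hi) 2⟩
  have hvU : (∑ j, ‖v j‖^2) = U := by
    rw [hU, hv]
    simp [Fintype.sum_sum_type]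
  have hCS : ‖star v ⬝ᵥ y‖ ^ 2 ≤ U * r := by
    have h5 := cs16 v y
    rwa [hvU, ← hr] at h5
  have hmain : ‖star w ⬝ᵥ u‖ ^ 2 ≤ η * U * S.im := by
    rw [hwu, habs, hSim, mul_pow]
    nlinarith [hCS, sq_nonneg η]
  constructor
  · rw [div_le_iff₀ (mul_pos hη hUpos)]
    calc ‖star w ⬝ᵥ u‖ ^ 2 ≤ η * U * S.im := hmain
      _ = S.im * (η * U) := by ring
  · intro hbound
    have hSimle : S.im ≤ ‖S‖ := Complex.im_le_norm S
    calc ‖star w ⬝ᵥ u‖ ^ 2 ≤ η * U * S.im := hmain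
      _ ≤ η * U * (C * ∑ i, ‖w i‖^2) := by
          apply mul_le_mul_of_nonneg_left (hSimle.trans hbound) (le_of_lt (mul_pos hη hUpos))
      _ = C * η * (∑ i, ‖w i‖^2) * U := by ring
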